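/- arXiv:1911.00434 — 6 statements merged into one kernel-verified Lean document; each statement's English description precedes it below -/
import Mathlib

section
/- Let G = (V_G, E_G) be a graph and H = (V_H, E_H) a finite graph. If every finite induced subgraph of G admits a graph homomorphism into H, then G admits a graph homomorphism into H. -/
/-- Compactness for graph homomorphisms into a finite graph: if every finite
induced subgraph of `G` has a homomorphism into the finite graph `H`, then so does `G`. -/
theorem stmt_2 {V W : Type*} [Finite W] (G : SimpleGraph V) (H : SimpleGraph W)
    (h : ∀ s : Finset V, Nonempty (G.induce (↑s : Set V) →g H)) :
    Nonempty (G →g H) := by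
  classical
  apply SimpleGraph.nonempty_hom_of_forall_finite_subgraph_hom
  intro G' hfin
  haveI := hfin.fintype
  have f := (h hfin.toFinset).some
  exact f.comp ⟨fun v => ⟨v.1, by simp [hfin.mem_toFinset.2 v.2]⟩,
    fun {a b} hab => by
      simpa using G'.adj_sub hab⟩
end

section
/- Let G₁ and G₂ be graphs with χ(G₁) = k < ω and χ(G₂) infinite (G₂ has no proper coloring with finitely many colors). Then the chromatic number of the tensor product G₁ × G₂ equals k. -/
/-- The tensor (categorical) product of two simple graphs. -/
def tensorProd {V₁ V₂ : Type*} (G₁ : SimpleGraph V₁) (G₂ : SimpleGraph V₂) :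
    SimpleGraph (V₁ × V₂) where
  Adj p q := G₁.Adj p.1 q.1 ∧ G₂.Adj p.2 q.2
  symm := ⟨fun p q h => ⟨G₁.adj_symm h.1, G₂.adj_symm h.2⟩⟩
  loopless := ⟨fun p h => G₁.irrefl h.1⟩

open SimpleGraph in
/-- De Bruijn–Erdős style compactness: if every finite subgraph is `n`-colorable, so is `G`. -/
lemma colorable_of_forall_finsubgraph {V : Type*} (G : SimpleGraph V) (n : ℕ)
    (h : ∀ G' : G.Subgraph, G'.verts.Finite → G'.coe.Colorable n) : G.Colorable n := by
  exact SimpleGraph.nonempty_hom_of_forall_finite_subgraph_hom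
    (fun G' hG' => (h G' hG').some)

open SimpleGraph in
lemma tensor_colorable_imp {V₁ V₂ : Type*} (G₁ : SimpleGraph V₁) (G₂ : SimpleGraph V₂)
    (h₂ : G₂.chromaticNumber = ⊤) (n : ℕ) (hc : (tensorProd G₁ G₂).Colorable n) :
    G₁.Colorable n := by
  classical
  by_contra hn
  -- find a finite subgraph of G₁ that is not n-colorable
  have : ¬ ∀ G' : G₁.Subgraph, G'.verts.Finite → G'.coe.Colorable n := by
    intro h; exact hn (colorable_of_forall_finsubgraph G₁ n h)
  push_neg at this
  obtain ⟨H, hHfin, hHcol⟩ := this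
  obtain ⟨c⟩ := hc
  haveI : Fintype H.verts := hHfin.fintype
  -- color G₂ by the restricted functions
  have : G₂.Colorable (Fintype.card (H.verts → Fin n)) := by
    refine (Coloring.mk (fun y => (fun x : H.verts => c (x.1, y))) ?_).colorable
    intro y y' hyy' heq
    apply hHcol
    refine ⟨Coloring.mk (fun x : H.verts => c (x.1, y)) ?_⟩
    intro x x' hxx' hcx
    have hadj : (tensorProd G₁ G₂).Adj (x.1, y) (x'.1, y') :=
      ⟨H.adj_sub hxx', hyy'⟩
    have := c.valid hadj
    have h4 : c (x'.1, y) = c (x'.1, y') := congrFun heq x'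
    have h5 : c (x.1, y) = c (x'.1, y) := hcx
    exact this (h5.trans h4)
  have h3 := this.chromaticNumber_le
  rw [h₂] at h3
  exact (ENat.top_ne_coe _ (le_antisymm h3 le_top)).elim

/-- Hajnal's theorem: if `χ(G₁) = k` is finite and `χ(G₂)` is infinite, then
the chromatic number of the tensor product `G₁ × G₂` equals `k`. -/
theorem stmt_6 {V₁ V₂ : Type*} (G₁ : SimpleGraph V₁) (G₂ : SimpleGraph V₂)
    (k : ℕ) (h₁ : G₁.chromaticNumber = k) (h₂ : G₂.chromaticNumber = ⊤) :
    (tensorProd G₁ G₂).chromaticNumber = k := by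
  have hle : (tensorProd G₁ G₂).chromaticNumber ≤ G₁.chromaticNumber := by
    apply SimpleGraph.chromaticNumber_le_of_forall_imp
    intro n ⟨c⟩
    exact ⟨SimpleGraph.Coloring.mk (fun p => c p.1) (fun h => c.valid h.1)⟩
  have hge : G₁.chromaticNumber ≤ (tensorProd G₁ G₂).chromaticNumber := by
    apply SimpleGraph.chromaticNumber_le_of_forall_imp
    intro n hc
    exact tensor_colorable_imp G₁ G₂ h₂ n hc
  rw [← h₁]
  exact le_antisymm hle hge
end

section
/- Let (P, ≤) be a partially ordered set in which every chain is finite and every antichain is countable. If P is well-orderable, then P is countable. -/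
/-- A well-orderable poset in which every chain is finite and every antichain is
countable is countable. -/
theorem stmt_9 {P : Type*} [PartialOrder P]
    (hwo : ∃ r : P → P → Prop, IsWellOrder P r)
    (hchain : ∀ c : Set P, IsChain (· ≤ ·) c → c.Finite)
    (hanti : ∀ a : Set P, IsAntichain (· ≤ ·) a → a.Countable) :
    Countable P := by
  classical
  -- `<` is well-founded: else there is an infinite descending chain.
  have hwf : WellFounded ((· < ·) : P → P → Prop) := by
    rw [RelEmbedding.wellFounded_iff_isEmpty]
    constructor
    intro f
    have hmono : ∀ a b : ℕ, a < b → f b < f a := fun a b h => f.map_rel_iff.2 h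
    have hc : IsChain (· ≤ ·) (Set.range f) := by
      rintro _ ⟨a, rfl⟩ _ ⟨b, rfl⟩ hne
      rcases lt_trichotomy a b with h | h | h
      · exact Or.inr (hmono a b h).le
      · exact absurd (congrArg f h) hne
      · exact Or.inl (hmono b a h).le
    exact (Set.infinite_range_of_injective f.injective) (hchain _ hc)
  -- Key: any uncountable set has an element whose strict upset in the set is uncountable.
  have key : ∀ S : Set P, ¬ S.Countable → ∃ x ∈ S, ¬ (S ∩ {y | x < y}).Countable := by
    intro S hS
    by_contra hcon
    push_neg at hcon
    set M : Set P := {m ∈ S | ∀ x ∈ S, ¬ x < m} with hMdef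
    have hM : IsAntichain (· ≤ ·) M := by
      rintro a ⟨haS, _⟩ b ⟨hbS, hbmin⟩ hne hab
      exact hbmin a haS (lt_of_le_of_ne hab hne)
    have hMc : M.Countable := hanti M hM
    have hcover : S ⊆ ⋃ m ∈ M, (S ∩ {y | m ≤ y}) := by
      intro x hx
      obtain ⟨m, hm, hmin⟩ := hwf.has_min {y ∈ S | y ≤ x} ⟨x, hx, le_refl x⟩
      refine Set.mem_biUnion (show m ∈ M from ?_) ⟨hx, hm.2⟩
      exact ⟨hm.1, fun z hz hzm => hmin z ⟨hz, le_trans hzm.le hm.2⟩ hzm⟩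
    have hpiece : ∀ m ∈ M, (S ∩ {y | m ≤ y}).Countable := by
      intro m hm
      have h1 : (S ∩ {y | m ≤ y}) ⊆ insert m (S ∩ {y | m < y}) := by
        intro y ⟨hyS, hmy⟩
        rcases eq_or_lt_of_le hmy with h | h
        · exact Or.inl h.symm
        · exact Or.inr ⟨hyS, h⟩
      exact Set.Countable.mono h1 ((hcon m hm.1).insert m)
    exact hS (Set.Countable.mono hcover (hMc.biUnion hpiece))
  -- Now suppose P is uncountable and build an infinite ascending chain.
  by_contra hP
  have huniv : ¬ (Set.univ : Set P).Countable := fun hc =>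
    hP (Set.countable_univ_iff.mp hc)
  let T := {S : Set P // ¬ S.Countable}
  let pick : T → P := fun S => (key S.1 S.2).choose
  have hpick_mem : ∀ S : T, pick S ∈ S.1 := fun S => (key S.1 S.2).choose_spec.1
  have hpick_unc : ∀ S : T, ¬ (S.1 ∩ {y | pick S < y}).Countable :=
    fun S => (key S.1 S.2).choose_spec.2
  let step : T → T := fun S => ⟨S.1 ∩ {y | pick S < y}, hpick_unc S⟩
  let S0 : T := ⟨Set.univ, huniv⟩
  let f : ℕ → P := fun n => pick (step^[n] S0)
  have hf : StrictMono f := by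
    apply strictMono_nat_of_lt_succ
    intro n
    have h1 : f (n + 1) ∈ (step^[n + 1] S0).1 := hpick_mem _
    rw [Function.iterate_succ_apply'] at h1
    exact h1.2
  have hc : IsChain (· ≤ ·) (Set.range f) := by
    rintro _ ⟨a, rfl⟩ _ ⟨b, rfl⟩ hne
    rcases lt_trichotomy a b with h | h | h
    · exact Or.inl (hf h).le
    · exact absurd (congrArg f h) hne
    · exact Or.inr (hf h).le
  exact (Set.infinite_range_of_injective hf.injective) (hchain _ hc)
end

section
/- Let ℵ_α be a regular infinite cardinal and (P, ≤) a partially ordered set in which every chain is finite and every antichain has cardinality at most ℵ_α. Then P has cardinality at most ℵ_α. -/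
universe u

open Cardinal Set

/-- If `κ` is a regular (hence infinite) cardinal and `(P, ≤)` is a poset in which
every chain is finite and every antichain has cardinality at most `κ`, then `P` has
cardinality at most `κ`. -/
theorem stmt_10 {P : Type u} [PartialOrder P] (κ : Cardinal.{u}) (hκ : κ.IsRegular)
    (hchain : ∀ c : Set P, IsChain (· ≤ ·) c → c.Finite)
    (hanti : ∀ a : Set P, IsAntichain (· ≤ ·) a → Cardinal.mk a ≤ κ) :
    Cardinal.mk P ≤ κ := by
  have hκ0 : Cardinal.aleph0 ≤ κ := hκ.aleph0_le
  -- an injective monotone-in-either-direction sequence gives an infinite chain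
  have nochain : ∀ f : ℕ → P, Function.Injective f →
      (∀ m n : ℕ, m ≤ n → f n ≤ f m ∨ f m ≤ f n) → False := by
    intro f hinj hmono
    have hc : IsChain (· ≤ ·) (Set.range f) := by
      rintro _ ⟨m, rfl⟩ _ ⟨n, rfl⟩ _
      rcases le_total m n with h | h
      · rcases hmono m n h with h' | h'
        · exact Or.inr h'
        · exact Or.inl h'
      · rcases hmono n m h with h' | h'
        · exact Or.inl h'
        · exact Or.inr h'
    exact (Set.infinite_range_of_injective hinj) (hchain _ hc)
  have wflt : WellFounded ((· < ·) : P → P → Prop) := by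
    rw [RelEmbedding.wellFounded_iff_isEmpty]
    refine ⟨fun f => ?_⟩
    have hanti' : StrictAnti (fun n => f n) := strictAnti_nat_of_succ_lt fun n => f.map_rel_iff.2 (Nat.lt_succ_self n)
    exact nochain (fun n => f n) hanti'.injective
      (fun m n h => Or.inl (hanti'.antitone h))
  have wfgt : WellFounded ((· > ·) : P → P → Prop) := by
    rw [RelEmbedding.wellFounded_iff_isEmpty]
    refine ⟨fun f => ?_⟩
    have hmono' : StrictMono (fun n => f n) := strictMono_nat_of_lt_succ fun n => f.map_rel_iff.2 (Nat.lt_succ_self n)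
    exact nochain (fun n => f n) hmono'.injective
      (fun m n h => Or.inr (hmono'.monotone h))
  -- every element of a set lies below a maximal element of the set
  have hmax : ∀ (s : Set P) (x : P), x ∈ s →
      ∃ m, (m ∈ s ∧ ∀ y ∈ s, m ≤ y → y = m) ∧ x ≤ m := by
    intro s x hx
    obtain ⟨m, hm, hmin⟩ := wfgt.has_min {y | y ∈ s ∧ x ≤ y} ⟨x, hx, le_rfl⟩
    refine ⟨m, ⟨hm.1, fun y hy hmy => ?_⟩, hm.2⟩
    by_contra hne
    exact hmin y ⟨hy, hm.2.trans hmy⟩ (lt_of_le_of_ne hmy (Ne.symm hne))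
  -- covering lemma
  have cover : ∀ s : Set P, (∀ m ∈ s, Cardinal.mk {y : P | y < m} ≤ κ) →
      Cardinal.mk s ≤ κ := by
    intro s hs
    set M : Set P := {m | m ∈ s ∧ ∀ y ∈ s, m ≤ y → y = m} with hMdef
    have hMa : IsAntichain (· ≤ ·) M := by
      intro a ha b hb hab hle
      exact hab (ha.2 b hb.1 hle).symm
    have hMκ : Cardinal.mk M ≤ κ := hanti M hMa
    have hsub : s ⊆ ⋃ m ∈ M, {y : P | y ≤ m} := by
      intro x hx
      obtain ⟨m, hm, hxm⟩ := hmax s x hx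
      exact Set.mem_biUnion hm hxm
    have hbound : ∀ m : M, Cardinal.mk {y : P | y ≤ (m : P)} ≤ κ := by
      intro m
      have h1 : {y : P | y ≤ (m : P)} ⊆ insert (m : P) {y : P | y < (m : P)} := by
        intro y hy
        rcases eq_or_lt_of_le hy with h | h
        · exact Or.inl h
        · exact Or.inr h
      calc Cardinal.mk {y : P | y ≤ (m : P)}
          ≤ Cardinal.mk (insert (m : P) {y : P | y < (m : P)} : Set P) :=
            Cardinal.mk_le_mk_of_subset h1
        _ ≤ Cardinal.mk {y : P | y < (m : P)} + 1 := Cardinal.mk_insert_le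
        _ ≤ κ + 1 := by gcongr; exact hs m m.2.1
        _ ≤ κ + κ := by gcongr; exact one_le_aleph0.trans hκ0
        _ = κ := Cardinal.add_eq_self hκ0
    calc Cardinal.mk s
        ≤ Cardinal.mk (⋃ m ∈ M, {y : P | y ≤ m}) := Cardinal.mk_le_mk_of_subset hsub
      _ ≤ Cardinal.mk M * ⨆ m : M, Cardinal.mk {y : P | y ≤ (m : P)} :=
          Cardinal.mk_biUnion_le _ _
      _ ≤ κ * κ := by
          apply mul_le_mul' hMκ
          rcases isEmpty_or_nonempty M with h | h
          · simp [iSup_of_empty]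
          · exact ciSup_le' hbound
      _ = κ := Cardinal.mul_eq_self hκ0
  have aux : ∀ x : P, Cardinal.mk {y : P | y < x} ≤ κ := by
    intro x
    induction x using wflt.induction with
    | _ x ih => exact cover _ fun m hm => ih m hm
  have := cover Set.univ fun m _ => aux m
  rwa [Cardinal.mk_univ] at this
end

section
/- Every partially ordered set without a maximal element has two disjoint cofinal subsets. -/
/-- Every partially ordered set without a maximal element has two disjoint
cofinal subsets. -/
theorem stmt_11 {P : Type*} [PartialOrder P] (h : ∀ p : P, ∃ q : P, p < q) :
    ∃ C₁ C₂ : Set P, Disjoint C₁ C₂ ∧ (∀ p : P, ∃ c ∈ C₁, p ≤ c) ∧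
      (∀ p : P, ∃ c ∈ C₂, p ≤ c) := by
  classical
  choose f hf using h
  -- families of pairwise-disjoint strictly increasing ω-chains
  set S : Set (Set (ℕ → P)) :=
    {𝒞 | (∀ g ∈ 𝒞, StrictMono g) ∧
      ∀ g ∈ 𝒞, ∀ g' ∈ 𝒞, g ≠ g' → Disjoint (Set.range g) (Set.range g')} with hS
  obtain ⟨𝒞, h𝒞max⟩ : ∃ 𝒞, Maximal (· ∈ S) 𝒞 := by
    apply zorn_subset
    intro c hc hchain
    refine ⟨⋃₀ c, ⟨?_, ?_⟩, fun s hs => Set.subset_sUnion_of_mem hs⟩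
    · rintro g ⟨t, ht, hg⟩
      exact (hc ht).1 g hg
    · rintro g ⟨t, ht, hg⟩ g' ⟨t', ht', hg'⟩ hne
      rcases hchain.total ht ht' with hsub | hsub
      · exact (hc ht').2 g (hsub hg) g' hg' hne
      · exact (hc ht).2 g hg g' (hsub hg') hne
  obtain ⟨h𝒞, hmax⟩ := h𝒞max
  -- key: every p has some chain element strictly above it
  have key : ∀ p : P, ∃ g ∈ 𝒞, ∃ m : ℕ, p < g m := by
    intro p
    by_contra hcon
    push_neg at hcon
    set gp : ℕ → P := fun n => f^[n + 1] p with hgp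
    have hmono : StrictMono gp := by
      apply strictMono_nat_of_lt_succ
      intro n
      simp only [hgp, Function.iterate_succ_apply']
      exact hf _
    have hlt : ∀ n, p < gp n := by
      intro n
      induction n with
      | zero => exact hf p
      | succ k ih =>
        calc p < gp k := ih
        _ < gp (k + 1) := hmono (Nat.lt_succ_self k)
    have hdisj : ∀ g' ∈ 𝒞, Disjoint (Set.range gp) (Set.range g') := by
      intro g' hg'
      rw [Set.disjoint_left]
      rintro x ⟨n, rfl⟩ ⟨m, hm⟩
      exact hcon g' hg' m (hm ▸ hlt n)
    have hgpnot : gp ∉ 𝒞 := by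
      intro hmem
      have := hdisj gp hmem
      rw [Set.disjoint_left] at this
      exact this ⟨0, rfl⟩ ⟨0, rfl⟩
    have hbig : insert gp 𝒞 ∈ S := by
      constructor
      · rintro g (rfl | hg)
        · exact hmono
        · exact h𝒞.1 g hg
      · rintro g (rfl | hg) g' (rfl | hg') hne
        · exact absurd rfl hne
        · exact hdisj g' hg'
        · exact (hdisj g hg).symm
        · exact h𝒞.2 g hg g' hg' hne
    have := hmax hbig (Set.subset_insert _ _)
    exact hgpnot (this (Set.mem_insert _ _))
  refine ⟨{x | ∃ g ∈ 𝒞, ∃ n, Even n ∧ g n = x},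
    {x | ∃ g ∈ 𝒞, ∃ n, Odd n ∧ g n = x}, ?_, ?_, ?_⟩
  · rw [Set.disjoint_left]
    rintro x ⟨g, hg, n, hn, rfl⟩ ⟨g', hg', m, hm, heq⟩
    by_cases hgg : g = g'
    · subst hgg
      have : m = n := (h𝒞.1 g hg).injective heq
      subst this
      exact (Nat.not_odd_iff_even.mpr hn) hm
    · have := h𝒞.2 g' hg' g hg (Ne.symm hgg)
      rw [Set.disjoint_left] at this
      exact this ⟨m, heq⟩ ⟨n, rfl⟩
  · intro p
    obtain ⟨g, hg, m, hm⟩ := key p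
    rcases Nat.even_or_odd m with he | ho
    · exact ⟨g m, ⟨g, hg, m, he, rfl⟩, hm.le⟩
    · refine ⟨g (m + 1), ⟨g, hg, m + 1, ?_, rfl⟩,
        (hm.trans ((h𝒞.1 g hg) (Nat.lt_succ_self m))).le⟩
      exact Odd.add_one ho
  · intro p
    obtain ⟨g, hg, m, hm⟩ := key p
    rcases Nat.even_or_odd m with he | ho
    · refine ⟨g (m + 1), ⟨g, hg, m + 1, ?_, rfl⟩,
        (hm.trans ((h𝒞.1 g hg) (Nat.lt_succ_self m))).le⟩
      exact Even.add_one he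
    · exact ⟨g m, ⟨g, hg, m, ho, rfl⟩, hm.le⟩
end

section
/- Let (P, <) be a partially ordered set and k a natural number such that P has no antichain of size k+1 but has at least one antichain of size k. Then P can be partitioned into k chains. -/
open Classical in
/-- The width of a finite subset: the largest size of an antichain inside it. -/
noncomputable def dilWidth {P : Type*} [PartialOrder P] (s : Finset P) : ℕ :=
  (s.powerset.filter (fun t : Finset P => IsAntichain (· ≤ ·) (↑t : Set P))).sup Finset.card

section aux
variable {P : Type*} [PartialOrder P]

open Classical

lemma dilWidth_le_of {s t : Finset P} (hts : t ⊆ s)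
    (hta : IsAntichain (· ≤ ·) (↑t : Set P)) : t.card ≤ dilWidth s := by
  apply Finset.le_sup
  simp [Finset.mem_filter, Finset.mem_powerset, hts, hta]

lemma dilWidth_mono {s t : Finset P} (hst : s ⊆ t) : dilWidth s ≤ dilWidth t := by
  apply Finset.sup_le
  intro u hu
  rw [Finset.mem_filter, Finset.mem_powerset] at hu
  exact dilWidth_le_of (hu.1.trans hst) hu.2

lemma exists_antichain_card_dilWidth (s : Finset P) :
    ∃ t : Finset P, t ⊆ s ∧ IsAntichain (· ≤ ·) (↑t : Set P) ∧ t.card = dilWidth s := by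
  have hne : (s.powerset.filter (fun t : Finset P => IsAntichain (· ≤ ·) (↑t : Set P))).Nonempty := by
    refine ⟨∅, ?_⟩
    simp [Finset.mem_filter, Finset.empty_subset]
  obtain ⟨t, ht, hts⟩ := Finset.exists_mem_eq_sup _ hne Finset.card
  rw [Finset.mem_filter, Finset.mem_powerset] at ht
  exact ⟨t, ht.1, ht.2, hts.symm⟩

/-- A nonempty finite chain has a greatest element. -/
lemma chain_finset_exists_greatest {t : Finset P} (hne : t.Nonempty)
    (hc : IsChain (· ≤ ·) (↑t : Set P)) : ∃ b ∈ t, ∀ x ∈ t, x ≤ b := by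
  obtain ⟨b, hb, hmax⟩ := t.exists_maximal hne
  refine ⟨b, hb, fun x hx => ?_⟩
  rcases eq_or_ne x b with rfl | hxb
  · exact le_rfl
  · rcases hc hx hb hxb with h | h
    · exact h
    · exact hmax hx h

/-- If `f` colors `s'` with colors `< w` and chain fibers, then any antichain in `s'`
of size `w` contains an element of each color `i < w`. -/
lemma antichain_meets {s' t : Finset P} {f : P → ℕ} {w i : ℕ}
    (hb : ∀ x ∈ s', f x < w)
    (hch : ∀ j : ℕ, IsChain (· ≤ ·) {x : P | x ∈ s' ∧ f x = j})
    (hts : t ⊆ s') (hta : IsAntichain (· ≤ ·) (↑t : Set P)) (htc : t.card = w)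
    (hi : i < w) : ∃ x ∈ t, f x = i := by
  have hinj : Set.InjOn f ↑t := by
    intro x hx y hy hxy
    by_contra hne
    rcases (hch (f x)) ⟨hts hx, rfl⟩ ⟨hts hy, hxy.symm⟩ hne with h | h
    · exact hta hx hy hne h
    · exact hta hy hx (Ne.symm hne) h
  have hsub : t.image f ⊆ Finset.range w := by
    intro j hj
    rw [Finset.mem_image] at hj
    obtain ⟨x, hx, rfl⟩ := hj
    exact Finset.mem_range.mpr (hb x (hts hx))
  have hcard : (t.image f).card = w := by
    rw [Finset.card_image_of_injOn hinj, htc]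
  have : t.image f = Finset.range w := by
    apply Finset.eq_of_subset_of_card_le hsub
    rw [hcard, Finset.card_range]
  have : i ∈ t.image f := by rw [this]; exact Finset.mem_range.mpr hi
  rw [Finset.mem_image] at this
  obtain ⟨x, hx, hfx⟩ := this
  exact ⟨x, hx, hfx⟩

/-- Finite Dilworth: any finite subset of a poset can be partitioned into
`dilWidth s` chains. -/
lemma finite_dilworth : ∀ (n : ℕ) (s : Finset P), s.card ≤ n →
    ∃ f : P → ℕ, (∀ x ∈ s, f x < dilWidth s) ∧
      ∀ i : ℕ, IsChain (· ≤ ·) {x : P | x ∈ s ∧ f x = i} := by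
  intro n
  induction n with
  | zero =>
    intro s hs
    have : s = ∅ := Finset.card_eq_zero.mp (Nat.le_zero.mp hs)
    subst this
    exact ⟨fun _ => 0, fun x hx => absurd hx (Finset.notMem_empty x),
      fun i x hx => absurd hx.1 (Finset.notMem_empty x)⟩
  | succ n ih =>
    intro s hs
    rcases s.eq_empty_or_nonempty with rfl | hne
    · exact ⟨fun _ => 0, fun x hx => absurd hx (Finset.notMem_empty x),
        fun i x hx => absurd hx.1 (Finset.notMem_empty x)⟩
    obtain ⟨a, ha, hamax⟩ := s.exists_maximal hne
    set s' : Finset P := s.erase a with hs'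
    have hs'card : s'.card ≤ n := by
      have h1 : s'.card = s.card - 1 := Finset.card_erase_of_mem ha
      omega
    obtain ⟨f', hf'b, hf'c⟩ := ih s' hs'card
    set w : ℕ := dilWidth s' with hwdef
    have hws : w ≤ dilWidth s := dilWidth_mono (Finset.erase_subset a s)
    by_cases hcase : dilWidth s ≤ w
    · -- hard case: width s = w
      have hw1 : 1 ≤ w := by
        have : ({a} : Finset P).card ≤ dilWidth s :=
          dilWidth_le_of (Finset.singleton_subset_iff.mpr ha)
            (Set.Subsingleton.isAntichain (by simp) _)
        simpa using this.trans hcase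
      -- the top element of color class i appearing in a w-antichain
      set T : ℕ → Finset P := fun i =>
        s'.filter (fun x => f' x = i ∧ ∃ t : Finset P, t ⊆ s' ∧
          IsAntichain (· ≤ ·) (↑t : Set P) ∧ t.card = w ∧ x ∈ t) with hT
    -- each T i for i < w is nonempty
      have hTne : ∀ i < w, (T i).Nonempty := by
        intro i hi
        obtain ⟨t₀, ht₀s, ht₀a, ht₀c⟩ := exists_antichain_card_dilWidth s'
        obtain ⟨x, hxt, hfx⟩ := antichain_meets hf'b hf'c ht₀s ht₀a ht₀c hi
        exact ⟨x, Finset.mem_filter.mpr ⟨ht₀s hxt, hfx, t₀, ht₀s, ht₀a, ht₀c, hxt⟩⟩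
      have hTchain : ∀ i : ℕ, IsChain (· ≤ ·) (↑(T i) : Set P) := by
        intro i x hx y hy hxy
        rw [Finset.mem_coe, hT, Finset.mem_filter] at hx hy
        exact hf'c i ⟨hx.1, hx.2.1⟩ ⟨hy.1, hy.2.1⟩ hxy
      have hTtop : ∀ i < w, ∃ b ∈ T i, ∀ x ∈ T i, x ≤ b := fun i hi =>
        chain_finset_exists_greatest (hTne i hi) (hTchain i)
      set b : ℕ → P := fun i => if h : i < w then (hTtop i h).choose else a with hbdef
      have hbT : ∀ i < w, b i ∈ T i := by
        intro i hi; rw [hbdef]; simp only [dif_pos hi]; exact (hTtop i hi).choose_spec.1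
      have hbtop : ∀ i < w, ∀ x ∈ T i, x ≤ b i := by
        intro i hi; rw [hbdef]; simp only [dif_pos hi]; exact (hTtop i hi).choose_spec.2
      have hbs' : ∀ i < w, b i ∈ s' := fun i hi => Finset.mem_of_mem_filter _ (hbT i hi)
      have hbcolor : ∀ i < w, f' (b i) = i := fun i hi =>
        (Finset.mem_filter.mp (hbT i hi)).2.1
      -- b i lies in some w-antichain in s'
      have hbanti : ∀ i < w, ∃ t : Finset P, t ⊆ s' ∧
          IsAntichain (· ≤ ·) (↑t : Set P) ∧ t.card = w ∧ b i ∈ t := fun i hi =>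
        (Finset.mem_filter.mp (hbT i hi)).2.2
      -- key: if an element of s' has color i and lies in a w-antichain, it is ≤ b i
      have hkey : ∀ i < w, ∀ x ∈ s', f' x = i →
          (∃ t : Finset P, t ⊆ s' ∧ IsAntichain (· ≤ ·) (↑t : Set P) ∧ t.card = w ∧ x ∈ t) →
          x ≤ b i := by
        intro i hi x hx hfx ht
        exact hbtop i hi x (Finset.mem_filter.mpr ⟨hx, hfx, ht⟩)
      by_cases hsub : ∃ i, i < w ∧ b i ≤ a
      · obtain ⟨i, hiw, hba⟩ := hsub
        set K : Finset P := insert a (s'.filter (fun x => f' x = i ∧ x ≤ b i)) with hK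
        have haK : a ∈ K := Finset.mem_insert_self a _
        have hKs : K ⊆ s := by
          intro x hx
          rcases Finset.mem_insert.mp hx with rfl | hx
          · exact ha
          · exact Finset.erase_subset a s (Finset.mem_of_mem_filter _ hx)
        have hKle : ∀ x ∈ K, x ≤ a := by
          intro x hx
          rcases Finset.mem_insert.mp hx with rfl | hx
          · exact le_rfl
          · exact (Finset.mem_filter.mp hx).2.2.trans hba
        have hKchain : IsChain (· ≤ ·) (↑K : Set P) := by
          intro x hx y hy hxy
          rw [Finset.mem_coe, hK] at hx hy
          rcases Finset.mem_insert.mp hx with rfl | hx'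
          · right; exact hKle y hy
          · rcases Finset.mem_insert.mp hy with rfl | hy'
            · left; exact hKle x hx
            · rw [Finset.mem_filter] at hx' hy'
              exact hf'c i ⟨hx'.1, hx'.2.1⟩ ⟨hy'.1, hy'.2.1⟩ hxy
        set s'' : Finset P := s \ K with hs''
        have hs''s' : s'' ⊆ s' := by
          intro x hx
          rw [hs'', Finset.mem_sdiff] at hx
          refine Finset.mem_erase.mpr ⟨?_, hx.1⟩
          rintro rfl; exact hx.2 haK
        have hs''card : s''.card ≤ n := (Finset.card_le_card hs''s').trans hs'card
        -- width of s'' is < w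
        have hws'' : dilWidth s'' ≤ w - 1 := by
          obtain ⟨t, hts, hta, htc⟩ := exists_antichain_card_dilWidth s''
          rw [← htc]
          have htw : t.card ≤ w := dilWidth_le_of (hts.trans hs''s') hta
          rcases lt_or_eq_of_le htw with h | h
          · omega
          · exfalso
            obtain ⟨x, hxt, hfx⟩ := antichain_meets hf'b hf'c (hts.trans hs''s') hta h hiw
            have hxb : x ≤ b i := hkey i hiw x (hs''s' (hts hxt)) hfx
              ⟨t, hts.trans hs''s', hta, h, hxt⟩
            have hxK : x ∈ K := Finset.mem_insert_of_mem
              (Finset.mem_filter.mpr ⟨hs''s' (hts hxt), hfx, hxb⟩)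
            have := hts hxt
            rw [hs'', Finset.mem_sdiff] at this
            exact this.2 hxK
        obtain ⟨f'', hf''b, hf''c⟩ := ih s'' hs''card
        refine ⟨fun x => if x ∈ K then w - 1 else f'' x, ?_, ?_⟩
        · intro x hx
          by_cases hxK : x ∈ K
          · simp only [if_pos hxK]; omega
          · simp only [if_neg hxK]
            have hx'' : x ∈ s'' := Finset.mem_sdiff.mpr ⟨hx, hxK⟩
            have := hf''b x hx''
            omega
        · intro j x hx y hy hxy
          obtain ⟨hxs, hxj⟩ := hx
          obtain ⟨hys, hyj⟩ := hy
          by_cases hxK : x ∈ K <;> by_cases hyK : y ∈ K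
          · exact hKchain hxK hyK hxy
          · exfalso
            simp only [if_pos hxK] at hxj
            simp only [if_neg hyK] at hyj
            have hy'' : y ∈ s'' := Finset.mem_sdiff.mpr ⟨hys, hyK⟩
            have := hf''b y hy''
            omega
          · exfalso
            simp only [if_neg hxK] at hxj
            simp only [if_pos hyK] at hyj
            have hx'' : x ∈ s'' := Finset.mem_sdiff.mpr ⟨hxs, hxK⟩
            have := hf''b x hx''
            omega
          · simp only [if_neg hxK] at hxj
            simp only [if_neg hyK] at hyj
            exact hf''c j ⟨Finset.mem_sdiff.mpr ⟨hxs, hxK⟩, hxj⟩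
              ⟨Finset.mem_sdiff.mpr ⟨hys, hyK⟩, hyj⟩ hxy
      · -- otherwise {a} ∪ {b i} is an antichain of size w+1, contradiction
        exfalso
        push_neg at hsub
        set A : Finset P := insert a ((Finset.range w).image b) with hA
        have hbinj : Set.InjOn b ↑(Finset.range w) := by
          intro i hi j hj hij
          rw [Finset.coe_range, Set.mem_Iio] at hi hj
          have := hbcolor i hi
          rw [hij, hbcolor j hj] at this
          exact this.symm
        have haimg : a ∉ (Finset.range w).image b := by
          rw [Finset.mem_image]
          rintro ⟨i, hi, hbi⟩
          rw [Finset.mem_range] at hi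
          have := hbs' i hi
          rw [hbi] at this
          exact (Finset.mem_erase.mp this).1 rfl
        have hAcard : A.card = w + 1 := by
          rw [hA, Finset.card_insert_of_notMem haimg,
            Finset.card_image_of_injOn hbinj, Finset.card_range]
        have hAs : A ⊆ s := by
          intro x hx
          rcases Finset.mem_insert.mp hx with rfl | hx
          · exact ha
          · rw [Finset.mem_image] at hx
            obtain ⟨i, hi, rfl⟩ := hx
            exact Finset.erase_subset a s (hbs' i (Finset.mem_range.mp hi))
        -- pairwise incomparable among the b i
        have hbb : ∀ i < w, ∀ j < w, i ≠ j → ¬ b i ≤ b j := by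
          intro i hi j hj hij hle
          obtain ⟨t, hts, hta, htc, hbt⟩ := hbanti j hj
          obtain ⟨x, hxt, hfx⟩ := antichain_meets hf'b hf'c hts hta htc hi
          have hxb : x ≤ b i := hkey i hi x (hts hxt) hfx ⟨t, hts, hta, htc, hxt⟩
          have hxne : x ≠ b j := by
            intro h; rw [h, hbcolor j hj] at hfx; exact hij hfx.symm
          exact hta hxt hbt hxne (hxb.trans hle)
        have hAanti : IsAntichain (· ≤ ·) (↑A : Set P) := by
          intro x hx y hy hxy hle
          rw [Finset.mem_coe, hA] at hx hy
          rcases Finset.mem_insert.mp hx with rfl | hx'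
          · rcases Finset.mem_insert.mp hy with rfl | hy'
            · exact hxy rfl
            · -- a ≤ b i : contradicts maximality of a
              rw [Finset.mem_image] at hy'
              obtain ⟨i, hi, rfl⟩ := hy'
              exact hxy (le_antisymm hle (hamax (Finset.erase_subset _ _
                (hbs' i (Finset.mem_range.mp hi))) hle))
          · rcases Finset.mem_insert.mp hy with rfl | hy'
            · -- b i ≤ a : excluded by hsub
              rw [Finset.mem_image] at hx'
              obtain ⟨i, hi, rfl⟩ := hx'
              exact hsub i (Finset.mem_range.mp hi) hle
            · rw [Finset.mem_image] at hx' hy'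
              obtain ⟨i, hi, rfl⟩ := hx'
              obtain ⟨j, hj, rfl⟩ := hy'
              have hij : i ≠ j := by
                rintro rfl; exact hxy rfl
              exact hbb i (Finset.mem_range.mp hi) j (Finset.mem_range.mp hj) hij hle
        have := dilWidth_le_of hAs hAanti
        rw [hAcard] at this
        omega
    · -- easy case: width s = w + 1, a can be its own chain
      push_neg at hcase
      refine ⟨fun x => if x = a then w else f' x, ?_, ?_⟩
      · intro x hx
        by_cases hxa : x = a
        · simp only [if_pos hxa]; exact hcase
        · simp only [if_neg hxa]
          have : x ∈ s' := Finset.mem_erase.mpr ⟨hxa, hx⟩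
          exact lt_trans (hf'b x this) hcase
      · intro j x hx y hy hxy
        obtain ⟨hxs, hxj⟩ := hx
        obtain ⟨hys, hyj⟩ := hy
        by_cases hxa : x = a <;> by_cases hya : y = a
        · exact absurd (hxa.trans hya.symm) hxy
        · exfalso
          simp only [if_pos hxa] at hxj
          simp only [if_neg hya] at hyj
          have : y ∈ s' := Finset.mem_erase.mpr ⟨hya, hys⟩
          have := hf'b y this
          omega
        · exfalso
          simp only [if_neg hxa] at hxj
          simp only [if_pos hya] at hyj
          have : x ∈ s' := Finset.mem_erase.mpr ⟨hxa, hxs⟩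
          have := hf'b x this
          omega
        · simp only [if_neg hxa] at hxj
          simp only [if_neg hya] at hyj
          exact hf'c j ⟨Finset.mem_erase.mpr ⟨hxa, hxs⟩, hxj⟩
            ⟨Finset.mem_erase.mpr ⟨hya, hys⟩, hyj⟩ hxy

end aux

/-- Dilworth's decomposition theorem for posets of finite width `k`: if `P` has no
antichain of size `k + 1` but has an antichain of size `k`, then `P` can be
partitioned into `k` chains. -/
theorem stmt_13 {P : Type*} [PartialOrder P] (k : ℕ)
    (h₁ : ¬ ∃ s : Finset P, IsAntichain (· ≤ ·) (↑s : Set P) ∧ s.card = k + 1)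
    (h₂ : ∃ s : Finset P, IsAntichain (· ≤ ·) (↑s : Set P) ∧ s.card = k) :
    ∃ f : P → Fin k, ∀ i : Fin k, IsChain (· ≤ ·) {x : P | f x = i} := by
  classical
  rcases Nat.eq_zero_or_pos k with rfl | hk
  · -- k = 0 : P is empty
    have hP : IsEmpty P := by
      by_contra h
      rw [not_isEmpty_iff] at h
      obtain ⟨x⟩ := h
      exact h₁ ⟨{x}, Set.Subsingleton.isAntichain (by simp) _, by simp⟩
    exact ⟨fun x => isEmptyElim x, fun i x hx => isEmptyElim x⟩
  haveI : Nonempty (Fin k) := ⟨⟨0, hk⟩⟩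
  -- every finite subset has width ≤ k
  have hwk : ∀ s : Finset P, dilWidth s ≤ k := by
    intro s
    by_contra h
    push_neg at h
    obtain ⟨t, hts, hta, htc⟩ := exists_antichain_card_dilWidth s
    obtain ⟨u, hut, huc⟩ := Finset.exists_subset_card_eq (show k + 1 ≤ t.card by omega)
    exact h₁ ⟨u, hta.subset (Finset.coe_subset.mpr hut), huc⟩
  -- family of closed sets: colorings good on a finite set
  set Z : Finset P → Set (P → Fin k) := fun s =>
    {f | ∀ x ∈ s, ∀ y ∈ s, f x = f y → x ≤ y ∨ y ≤ x} with hZ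
  have hdir : Directed (· ⊇ ·) Z := by
    intro s t
    refine ⟨s ∪ t, ?_, ?_⟩
    · intro f hf x hx y hy
      exact hf x (Finset.mem_union_left _ hx) y (Finset.mem_union_left _ hy)
    · intro f hf x hx y hy
      exact hf x (Finset.mem_union_right _ hx) y (Finset.mem_union_right _ hy)
  have hne : ∀ s : Finset P, (Z s).Nonempty := by
    intro s
    obtain ⟨f, hfb, hfc⟩ := finite_dilworth s.card s le_rfl
    refine ⟨fun x => if h : x ∈ s then ⟨f x, lt_of_lt_of_le (hfb x h) (hwk s)⟩
      else ⟨0, hk⟩, ?_⟩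
    intro x hx y hy hxy
    rcases eq_or_ne x y with rfl | hne
    · left; exact le_rfl
    simp only [dif_pos hx, dif_pos hy, Fin.mk.injEq] at hxy
    exact hfc (f x) ⟨hx, rfl⟩ ⟨hy, hxy.symm⟩ hne
  have hcl : ∀ s : Finset P, IsClosed (Z s) := by
    intro s
    have : Z s = ⋂ x ∈ s, ⋂ y ∈ s,
        {f : P → Fin k | f x = f y → x ≤ y ∨ y ≤ x} := by
      ext f
      simp only [hZ, Set.mem_setOf_eq, Set.mem_iInter]
    rw [this]
    refine isClosed_biInter fun x hx => isClosed_biInter fun y hy => ?_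
    by_cases hcomp : x ≤ y ∨ y ≤ x
    · have : {f : P → Fin k | f x = f y → x ≤ y ∨ y ≤ x} = Set.univ := by
        ext f; simp [hcomp]
      rw [this]; exact isClosed_univ
    · have : {f : P → Fin k | f x = f y → x ≤ y ∨ y ≤ x} =
          {f : P → Fin k | f x = f y}ᶜ := by
        ext f; simp only [Set.mem_setOf_eq, Set.mem_compl_iff]; tauto
      rw [this]
      have hopen : IsOpen {f : P → Fin k | f x = f y} := by
        have heq : {f : P → Fin k | f x = f y} =
            ⋃ c : Fin k, ((fun f : P → Fin k => f x) ⁻¹' {c}) ∩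
              ((fun f : P → Fin k => f y) ⁻¹' {c}) := by
          ext f
          simp only [Set.mem_setOf_eq, Set.mem_iUnion, Set.mem_inter_iff,
            Set.mem_preimage, Set.mem_singleton_iff]
          constructor
          · intro h; exact ⟨f x, rfl, h.symm⟩
          · rintro ⟨c, h1, h2⟩; rw [h1, h2]
        rw [heq]
        exact isOpen_iUnion fun c =>
          (((continuous_apply x).isOpen_preimage _ (isOpen_discrete _)).inter
            ((continuous_apply y).isOpen_preimage _ (isOpen_discrete _)))
      exact hopen.isClosed_compl
  have hcpt : ∀ s : Finset P, IsCompact (Z s) := fun s => (hcl s).isCompact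
  obtain ⟨g, hg⟩ := IsCompact.nonempty_iInter_of_directed_nonempty_isCompact_isClosed
    Z hdir hne hcpt hcl
  refine ⟨g, fun i x hx y hy hxy => ?_⟩
  have hgs := Set.mem_iInter.mp hg {x, y}
  have hx' : x ∈ ({x, y} : Finset P) := by simp
  have hy' : y ∈ ({x, y} : Finset P) := by simp
  exact hgs x hx' y hy' (hx.trans hy.symm)
end
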